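/- Let J^α (α = 1,2,3) be an almost hypercomplex structure on an open set U ⊆ ℝ^{4r} and suppose Γ_{XY}^Z are smooth symmetric connection coefficients on U which leave the complex structures invariant: ∂_X J^α_Y^Z − Γ_{XY}^W J^α_W^Z + Γ_{XW}^Z J^α_Y^W = 0 on U for every α. Then Γ coincides with the Obata connection: Γ_{XY}^Z = Γ^{Ob}_{XY}^Z everywhere on U. That is, the Obata connection is the unique torsionless connection preserving a hypercomplex structure. -/

import Mathlib

noncomputable section
set_option maxHeartbeats 1000000

/-- The Levi-Civita symbol on `Fin 3`, with `ε 0 1 2 = 1`. -/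
def epsLC (a b c : Fin 3) : ℝ :=
  if (a, b, c) = ((0 : Fin 3), (1 : Fin 3), (2 : Fin 3)) ∨ (a, b, c) = (1, 2, 0) ∨ (a, b, c) = (2, 0, 1) then 1
  else if (a, b, c) = (2, 1, 0) ∨ (a, b, c) = (0, 2, 1) ∨ (a, b, c) = (1, 0, 2) then -1
  else 0

/-- Partial derivative `∂_i f` of a scalar function on `ℝ^n`. -/
def pd {n : ℕ} (i : Fin n) (f : (Fin n → ℝ) → ℝ) (x : Fin n → ℝ) : ℝ :=
  fderiv ℝ f x (Pi.single i 1)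

/-- The diagonal Nijenhuis tensor `N_{XY}^Z` of a triple of (1,1)-tensor fields. -/
def nijenhuis {n : ℕ} (J : Fin 3 → Fin n → Fin n → (Fin n → ℝ) → ℝ)
    (X Y Z : Fin n) (x : Fin n → ℝ) : ℝ :=
  (1 / 12) * ∑ α, ∑ W,
    (J α X W x * (pd W (J α Y Z) x - pd Y (J α W Z) x)
      - J α Y W x * (pd W (J α X Z) x - pd X (J α W Z) x))

/-- The Obata connection `Γ^{Ob}_{XY}^Z` of a triple of (1,1)-tensor fields. -/
def obata {n : ℕ} (J : Fin 3 → Fin n → Fin n → (Fin n → ℝ) → ℝ)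
    (X Y Z : Fin n) (x : Fin n → ℝ) : ℝ :=
  -(1 / 6) * ∑ α, ∑ W,
    ((pd X (J α Y W) x + pd Y (J α X W) x
        + (1 / 2) * ∑ β, ∑ γ, epsLC α β γ *
            ((∑ u, J β X u x * pd u (J γ Y W) x) + ∑ u, J β Y u x * pd u (J γ X W) x))
      * J α W Z x)

/-- An almost hypercomplex structure on an open set `U ⊆ ℝ^n`: a smooth family of three
(1,1)-tensor fields forming at every point of `U` a quaternionic triple. -/
def IsAlmostHypercomplexOn {n : ℕ} (J : Fin 3 → Fin n → Fin n → (Fin n → ℝ) → ℝ)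
    (U : Set (Fin n → ℝ)) : Prop :=
  (∀ α X Y, ContDiffOn ℝ (⊤ : ℕ∞) (J α X Y) U) ∧
  ∀ α β X Z, ∀ x ∈ U, ∑ W, J α X W x * J β W Z x =
    (if α = β then (-1 : ℝ) else 0) * (if X = Z then 1 else 0)
      + ∑ γ, epsLC α β γ * J γ X Z x

/-- if smooth symmetric connection coefficients `Γ` leave the complex
structures of an almost hypercomplex structure invariant on an open `U ⊆ ℝ^{4r}`, then
`Γ` coincides with the Obata connection on `U` (uniqueness of the torsionless connection
preserving a hypercomplex structure). -/
private theorem rot3 {ι₁ ι₂ ι₃ : Type*} [Fintype ι₁] [Fintype ι₂] [Fintype ι₃]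
    (f : ι₁ → ι₂ → ι₃ → ℝ) :
    ∑ a, ∑ b, ∑ c, f a b c = ∑ c, ∑ a, ∑ b, f a b c := by
  calc ∑ a, ∑ b, ∑ c, f a b c = ∑ a, ∑ c, ∑ b, f a b c :=
        Finset.sum_congr rfl fun a _ => Finset.sum_comm
    _ = ∑ c, ∑ a, ∑ b, f a b c := Finset.sum_comm

private theorem rot4 {ι₁ ι₂ ι₃ ι₄ : Type*} [Fintype ι₁] [Fintype ι₂] [Fintype ι₃] [Fintype ι₄]
    (f : ι₁ → ι₂ → ι₃ → ι₄ → ℝ) :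
    ∑ a, ∑ b, ∑ c, ∑ d, f a b c d = ∑ d, ∑ a, ∑ b, ∑ c, f a b c d := by
  calc ∑ a, ∑ b, ∑ c, ∑ d, f a b c d = ∑ a, ∑ d, ∑ b, ∑ c, f a b c d :=
        Finset.sum_congr rfl fun a _ => rot3 _
    _ = ∑ d, ∑ a, ∑ b, ∑ c, f a b c d := Finset.sum_comm

private theorem perm6 {ι₁ ι₂ ι₃ ι₄ ι₅ ι₆ : Type*}
    [Fintype ι₁] [Fintype ι₂] [Fintype ι₃] [Fintype ι₄] [Fintype ι₅] [Fintype ι₆]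
    (F : ι₁ → ι₂ → ι₃ → ι₄ → ι₅ → ι₆ → ℝ) :
    ∑ a, ∑ b, ∑ c, ∑ d, ∑ e, ∑ f, F a b c d e f
      = ∑ c, ∑ e, ∑ f, ∑ a, ∑ d, ∑ b, F a b c d e f := by
  calc ∑ a, ∑ b, ∑ c, ∑ d, ∑ e, ∑ f, F a b c d e f
      = ∑ c, ∑ a, ∑ b, ∑ d, ∑ e, ∑ f, F a b c d e f := rot3 _
    _ = ∑ c, ∑ e, ∑ a, ∑ b, ∑ d, ∑ f, F a b c d e f :=
        Finset.sum_congr rfl fun c _ => rot4 _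
    _ = ∑ c, ∑ e, ∑ f, ∑ a, ∑ b, ∑ d, F a b c d e f :=
        Finset.sum_congr rfl fun c _ => Finset.sum_congr rfl fun e _ => rot4 _
    _ = ∑ c, ∑ e, ∑ f, ∑ a, ∑ d, ∑ b, F a b c d e f :=
        Finset.sum_congr rfl fun _ _ => Finset.sum_congr rfl fun _ _ =>
          Finset.sum_congr rfl fun _ _ => Finset.sum_congr rfl fun _ _ => Finset.sum_comm

private theorem eps_anti (a b c : Fin 3) : epsLC a c b = -epsLC a b c := by
  fin_cases a <;> fin_cases b <;> fin_cases c <;> simp +decide [epsLC]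

theorem key {m : ℕ} (j : Fin 3 → Fin m → Fin m → ℝ) (g : Fin m → Fin m → Fin m → ℝ)
    (hq : ∀ α β A C, ∑ W, j α A W * j β W C =
      (if α = β then (-1:ℝ) else 0) * (if A = C then 1 else 0) + ∑ γ, epsLC α β γ * j γ A C)
    (hgs : ∀ A B C, g A B C = g B A C) (X Y Z : Fin m) :
    ∑ α, ∑ W, ((∑ V, g X Y V * j α V W - ∑ V, g X V W * j α Y V
      + (∑ V, g Y X V * j α V W - ∑ V, g Y V W * j α X V)
      + 1 / 2 * ∑ β, ∑ γ, epsLC α β γ *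
         (∑ u, j β X u * (∑ V, g u Y V * j γ V W - ∑ V, g u V W * j γ Y V)
          + ∑ u, j β Y u * (∑ V, g u X V * j γ V W - ∑ V, g u V W * j γ X V)))
      * j α W Z) = -6 * g X Y Z := by
  have L1 : ∀ V C : Fin m, ∑ α, ∑ W, j α V W * j α W C = -3 * (if V = C then (1:ℝ) else 0) := by
    intro V C
    simp only [hq]
    simp +decide [Fin.sum_univ_three, epsLC]
    split <;> norm_num
  have L2 : ∀ (β : Fin 3) (V C : Fin m),
      ∑ α, ∑ γ, epsLC α β γ * ∑ W, j γ V W * j α W C = 2 * j β V C := by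
    intro β V C
    simp only [hq]
    fin_cases β <;> simp +decide [Fin.sum_univ_three, epsLC] <;> ring
  have inner_eq : ∀ (β : Fin 3) (p q : ℝ) (V : Fin m),
      ∑ α, ∑ γ, ∑ W, 1 / 2 * (epsLC α β γ * (p * (q * (j γ V W * j α W Z))))
        = p * (q * j β V Z) := by
    intro β p q V
    calc ∑ α, ∑ γ, ∑ W, 1 / 2 * (epsLC α β γ * (p * (q * (j γ V W * j α W Z))))
        = 1 / 2 * (p * (q * ∑ α, ∑ γ, epsLC α β γ * ∑ W, j γ V W * j α W Z)) := by
          simp only [Finset.mul_sum]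
          refine Finset.sum_congr rfl fun α _ => Finset.sum_congr rfl fun γ _ =>
            Finset.sum_congr rfl fun W _ => by ring
      _ = p * (q * j β V Z) := by rw [L2 β V Z]; ring
  -- the general ε-contraction claim
  have hQgen : ∀ A B : Fin m,
      (∑ α, ∑ W, ∑ β, ∑ γ, ∑ u, ∑ V,
          1 / 2 * (epsLC α β γ * (j β A u * (g u B V * (j γ V W * j α W Z)))))
        = ∑ α, ∑ W, ∑ V, g B V W * (j α A V * j α W Z) := by
    intro A B
    calc (∑ α, ∑ W, ∑ β, ∑ γ, ∑ u, ∑ V,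
            1 / 2 * (epsLC α β γ * (j β A u * (g u B V * (j γ V W * j α W Z)))))
        = ∑ β, ∑ u, ∑ V, ∑ α, ∑ γ, ∑ W,
            1 / 2 * (epsLC α β γ * (j β A u * (g u B V * (j γ V W * j α W Z)))) := perm6 _
      _ = ∑ β, ∑ u, ∑ V, j β A u * (g u B V * j β V Z) :=
          Finset.sum_congr rfl fun β _ => Finset.sum_congr rfl fun u _ =>
            Finset.sum_congr rfl fun V _ => inner_eq β (j β A u) (g u B V) V
      _ = ∑ β, ∑ u, ∑ V, g B u V * (j β A u * j β V Z) := by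
          refine Finset.sum_congr rfl fun β _ => Finset.sum_congr rfl fun u _ =>
            Finset.sum_congr rfl fun V _ => ?_
          rw [hgs u B V]; ring
      _ = ∑ α, ∑ W, ∑ V, g B V W * (j α A V * j α W Z) :=
          Finset.sum_congr rfl fun β _ => Finset.sum_comm
  have hG1 : ∑ α, ∑ W, ∑ V, g X Y V * (j α V W * j α W Z) = -3 * g X Y Z := by
    calc ∑ α, ∑ W, ∑ V, g X Y V * (j α V W * j α W Z)
        = ∑ V, ∑ α, ∑ W, g X Y V * (j α V W * j α W Z) := rot3 _
      _ = ∑ V, g X Y V * ∑ α, ∑ W, j α V W * j α W Z := by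
          refine Finset.sum_congr rfl fun V _ => ?_
          simp only [Finset.mul_sum]
      _ = ∑ V, g X Y V * (-3 * if V = Z then (1:ℝ) else 0) :=
          Finset.sum_congr rfl fun V _ => by rw [L1 V Z]
      _ = ∑ V, if V = Z then -3 * g X Y V else 0 :=
          Finset.sum_congr rfl fun V _ => by split <;> ring
      _ = -3 * g X Y Z := by
          rw [Finset.sum_ite_eq' Finset.univ Z fun V => -3 * g X Y V]
          simp
  have hG3 : ∑ α, ∑ W, ∑ V, g Y X V * (j α V W * j α W Z) = -3 * g X Y Z := by
    calc ∑ α, ∑ W, ∑ V, g Y X V * (j α V W * j α W Z)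
        = ∑ α, ∑ W, ∑ V, g X Y V * (j α V W * j α W Z) :=
          Finset.sum_congr rfl fun α _ => Finset.sum_congr rfl fun W _ =>
            Finset.sum_congr rfl fun V _ => by rw [hgs Y X V]
      _ = -3 * g X Y Z := hG1
  have hQ24 : (∑ α, ∑ W, ∑ β, ∑ γ, ∑ u, ∑ V,
        1 / 2 * (epsLC α β γ * (j β Y u * (g u V W * (j γ X V * j α W Z)))))
      = -(∑ α, ∑ W, ∑ β, ∑ γ, ∑ u, ∑ V,
        1 / 2 * (epsLC α β γ * (j β X u * (g u V W * (j γ Y V * j α W Z))))) := by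
    calc (∑ α, ∑ W, ∑ β, ∑ γ, ∑ u, ∑ V,
            1 / 2 * (epsLC α β γ * (j β Y u * (g u V W * (j γ X V * j α W Z)))))
        = ∑ α, ∑ W, ∑ β, ∑ γ, ∑ u, ∑ V,
            1 / 2 * (epsLC α β γ * (j β Y V * (g V u W * (j γ X u * j α W Z)))) :=
          Finset.sum_congr rfl fun α _ => Finset.sum_congr rfl fun W _ =>
            Finset.sum_congr rfl fun β _ => Finset.sum_congr rfl fun γ _ => Finset.sum_comm
      _ = ∑ α, ∑ W, ∑ β, ∑ γ, ∑ u, ∑ V,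
            1 / 2 * (epsLC α β γ * (j γ X u * (g u V W * (j β Y V * j α W Z)))) := by
          refine Finset.sum_congr rfl fun α _ => Finset.sum_congr rfl fun W _ =>
            Finset.sum_congr rfl fun β _ => Finset.sum_congr rfl fun γ _ =>
            Finset.sum_congr rfl fun u _ => Finset.sum_congr rfl fun V _ => ?_
          rw [hgs V u W]; ring
      _ = ∑ α, ∑ W, ∑ β, ∑ γ, ∑ u, ∑ V,
            1 / 2 * (epsLC α γ β * (j β X u * (g u V W * (j γ Y V * j α W Z)))) :=
          Finset.sum_congr rfl fun α _ => Finset.sum_congr rfl fun W _ => Finset.sum_comm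
      _ = ∑ α, ∑ W, ∑ β, ∑ γ, ∑ u, ∑ V,
            -(1 / 2 * (epsLC α β γ * (j β X u * (g u V W * (j γ Y V * j α W Z))))) := by
          refine Finset.sum_congr rfl fun α _ => Finset.sum_congr rfl fun W _ =>
            Finset.sum_congr rfl fun β _ => Finset.sum_congr rfl fun γ _ =>
            Finset.sum_congr rfl fun u _ => Finset.sum_congr rfl fun V _ => ?_
          rw [eps_anti α β γ]; ring
      _ = -(∑ α, ∑ W, ∑ β, ∑ γ, ∑ u, ∑ V,
            1 / 2 * (epsLC α β γ * (j β X u * (g u V W * (j γ Y V * j α W Z))))) := by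
          simp only [Finset.sum_neg_distrib]
  have hQ1 := hQgen X Y
  have hQ3 := hQgen Y X
  simp only [Finset.sum_mul, sub_mul, add_mul, mul_assoc, mul_sub, Finset.mul_sum,
    Finset.sum_sub_distrib, Finset.sum_add_distrib]
  simp only [mul_sub, mul_add, Finset.sum_sub_distrib, Finset.sum_add_distrib]
  simp only [Finset.mul_sum]
  linarith [hG1, hG3, hQ1, hQ3, hQ24]


theorem stmt_7 (r : ℕ) (U : Set (Fin (4 * r) → ℝ)) (hU : IsOpen U)
    (J : Fin 3 → Fin (4 * r) → Fin (4 * r) → (Fin (4 * r) → ℝ) → ℝ)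
    (hJ : IsAlmostHypercomplexOn J U)
    (Γ : Fin (4 * r) → Fin (4 * r) → Fin (4 * r) → (Fin (4 * r) → ℝ) → ℝ)
    (hΓsmooth : ∀ X Y Z, ContDiffOn ℝ (⊤ : ℕ∞) (Γ X Y Z) U)
    (hΓsym : ∀ X Y Z, ∀ x ∈ U, Γ X Y Z x = Γ Y X Z x)
    (hcov : ∀ α X Y Z, ∀ x ∈ U,
      pd X (J α Y Z) x
        - (∑ W, Γ X Y W x * J α W Z x)
        + (∑ W, Γ X W Z x * J α Y W x) = 0) :
    ∀ X Y Z, ∀ x ∈ U, Γ X Y Z x = obata J X Y Z x := by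
  intro X Y Z x hx
  have hp : ∀ α A B C, pd A (J α B C) x
      = (∑ W, Γ A B W x * J α W C x) - ∑ W, Γ A W C x * J α B W x := by
    intro α A B C
    have := hcov α A B C x hx
    linarith
  have hk := key (fun α A B => J α A B x) (fun A B C => Γ A B C x)
    (fun α β A C => hJ.2 α β A C x hx) (fun A B C => hΓsym A B C x hx) X Y Z
  rw [obata]
  simp only [hp]
  linarith [hk]
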